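/- Let σ > 0, and let f : [0, l] → ℂ be a C² map with |f'(x)| = 1 and |f''(x)| ≤ 2/σ for all x. Define F(x + iy) = f(x) + i·f'(x)·y for x ∈ [0, l] and |y| ≤ σ/4. Then at every point where F is differentiable, the Beltrami coefficient μ_F = (∂F/∂z̄)/(∂F/∂z) satisfies |μ_F| ≤ 1/3. In particular F is 2-quasiconformal. -/

import Mathlib

/-- The map `F(x + iy) = f(x) + i f'(x) y`. -/
noncomputable def beltramiMap (f : ℝ → ℂ) : ℂ → ℂ := fun u =>
  f u.re + Complex.I * deriv f u.re * (u.im : ℂ)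

/-- If `f : [0, l] → ℂ` is `C²` with `|f'| = 1` and `|f''| ≤ 2/σ`, then
`F(x + iy) = f(x) + i f'(x) y`, for `x ∈ [0, l]`, `|y| ≤ σ/4`, has Beltrami coefficient
`μ_F = F_z̄ / F_z` of modulus at most `1/3` at every point of differentiability; in
particular `F` is `2`-quasiconformal there. -/
theorem stmt15 (σ l : ℝ) (hσ : 0 < σ) (f : ℝ → ℂ) (hf : ContDiff ℝ 2 f)
    (hf1 : ∀ x ∈ Set.Icc (0 : ℝ) l, ‖deriv f x‖ = 1)
    (hf2 : ∀ x ∈ Set.Icc (0 : ℝ) l, ‖deriv (deriv f) x‖ ≤ 2 / σ) :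
    ∀ w : ℂ, w.re ∈ Set.Icc (0 : ℝ) l → |w.im| ≤ σ / 4 →
      DifferentiableAt ℝ (beltramiMap f) w →
      ‖((fderiv ℝ (beltramiMap f) w 1 + Complex.I * fderiv ℝ (beltramiMap f) w Complex.I) / 2) /
            ((fderiv ℝ (beltramiMap f) w 1 - Complex.I * fderiv ℝ (beltramiMap f) w Complex.I) / 2)‖
          ≤ 1 / 3 ∧
      ‖(fderiv ℝ (beltramiMap f) w 1 - Complex.I * fderiv ℝ (beltramiMap f) w Complex.I) / 2‖ +
          ‖(fderiv ℝ (beltramiMap f) w 1 + Complex.I * fderiv ℝ (beltramiMap f) w Complex.I) / 2‖ ≤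
        2 * (‖(fderiv ℝ (beltramiMap f) w 1 - Complex.I * fderiv ℝ (beltramiMap f) w Complex.I) / 2‖ -
          ‖(fderiv ℝ (beltramiMap f) w 1 + Complex.I * fderiv ℝ (beltramiMap f) w Complex.I) / 2‖) := by
  intro w hwre hwim _
  set x := w.re with hx
  set y := w.im with hy
  -- differentiability facts
  have hf1d : Differentiable ℝ f := hf.differentiable (by norm_num)
  have hf2' : ContDiff ℝ 1 (deriv f) := by
    have h2 : ContDiff ℝ (1 + 1) f := by norm_num; exact hf
    exact (contDiff_succ_iff_deriv.mp h2).2.2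
  have hfdd : Differentiable ℝ (deriv f) := hf2'.differentiable one_ne_zero
  -- explicit derivative
  have h1 : HasFDerivAt (fun u : ℂ => f u.re)
      (((1 : ℝ →L[ℝ] ℝ).smulRight (deriv f x)).comp Complex.reCLM) w :=
    ((hf1d x).hasDerivAt.hasFDerivAt).comp w Complex.reCLM.hasFDerivAt
  have h2 : HasFDerivAt (fun u : ℂ => deriv f u.re)
      (((1 : ℝ →L[ℝ] ℝ).smulRight (deriv (deriv f) x)).comp Complex.reCLM) w :=
    ((hfdd x).hasDerivAt.hasFDerivAt).comp (g := deriv f) (f := Complex.reCLM) w Complex.reCLM.hasFDerivAt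
  have h3 : HasFDerivAt (fun u : ℂ => (u.im : ℂ))
      (Complex.ofRealCLM.comp Complex.imCLM) w :=
    (Complex.ofRealCLM.comp Complex.imCLM).hasFDerivAt
  have hprod := ((h2.const_mul Complex.I).mul h3)
  have hF : HasFDerivAt (beltramiMap f) _ w := h1.add hprod
  have e1 : fderiv ℝ (beltramiMap f) w 1 = deriv f x + Complex.I * deriv (deriv f) x * y := by
    rw [hF.fderiv]
    simp [ContinuousLinearMap.smulRight_apply, Complex.real_smul, smul_smul]
    ring
  have e2 : fderiv ℝ (beltramiMap f) w Complex.I = Complex.I * deriv f x := by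
    rw [hF.fderiv]
    simp [ContinuousLinearMap.smulRight_apply, Complex.real_smul, smul_smul]
    rfl
  rw [e1, e2]
  -- abbreviations
  set A := deriv f x with hA
  set B := deriv (deriv f) x with hB
  have hA1 : ‖A‖ = 1 := hf1 x hwre
  have hB2 : ‖B‖ ≤ 2 / σ := hf2 x hwre
  have hnum : ‖(A + Complex.I * B * y + Complex.I * (Complex.I * A)) / 2‖ ≤ 1 / 4 := by
    have hII : Complex.I * (Complex.I * A) = -A := by
      rw [← mul_assoc, Complex.I_mul_I, neg_one_mul]
    have : A + Complex.I * B * y + Complex.I * (Complex.I * A) = Complex.I * B * y := by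
      rw [hII]; ring
    rw [this]
    rw [norm_div, norm_mul, norm_mul]
    simp only [Complex.norm_I, Complex.norm_real, Real.norm_eq_abs, Complex.norm_two, one_mul]
    have hby : ‖B‖ * |y| ≤ (2 / σ) * (σ / 4) := by
      apply mul_le_mul hB2 hwim (abs_nonneg _)
      positivity
    have : (2 / σ) * (σ / 4) = 1 / 2 := by field_simp; norm_num
    rw [this] at hby
    linarith
  have hden : 3 / 4 ≤ ‖(A + Complex.I * B * y - Complex.I * (Complex.I * A)) / 2‖ := by
    have hII : Complex.I * (Complex.I * A) = -A := by
      rw [← mul_assoc, Complex.I_mul_I, neg_one_mul]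
    have h : A + Complex.I * B * y - Complex.I * (Complex.I * A) = 2 * A + Complex.I * B * y := by
      rw [hII]; ring
    rw [h]
    have h2 : ‖2 * A + Complex.I * B * y‖ ≥ ‖2 * A‖ - ‖Complex.I * B * y‖ := by
      have := norm_sub_norm_le (2 * A) (-(Complex.I * B * y))
      simp only [norm_neg, sub_neg_eq_add] at this
      linarith
    have hIA : ‖2 * A‖ = 2 := by
      rw [norm_mul, hA1]; simp
    have hIBy : ‖Complex.I * B * y‖ ≤ 1 / 2 := by
      rw [norm_mul, norm_mul]
      simp only [Complex.norm_I, Complex.norm_real, Real.norm_eq_abs, one_mul]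
      have hby : ‖B‖ * |y| ≤ (2 / σ) * (σ / 4) := by
        apply mul_le_mul hB2 hwim (abs_nonneg _)
        positivity
      have : (2 / σ) * (σ / 4) = 1 / 2 := by field_simp; norm_num
      linarith
    rw [norm_div]
    rw [show ‖(2:ℂ)‖ = 2 from by norm_num]
    have : ‖2 * A + Complex.I * B * y‖ ≥ 3 / 2 := by linarith
    linarith
  constructor
  · rw [norm_div]
    have hdpos : 0 < ‖(A + Complex.I * B * y - Complex.I * (Complex.I * A)) / 2‖ := by
      linarith
    rw [div_le_div_iff₀ hdpos (by norm_num : (0:ℝ) < 3)]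
    linarith
  · linarith
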